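/- Let m be a positive integer, 0 < d < 1, and Q_m(x) = Σ_{i=0}^m x^i. Then every mode t of Q_m(x+d) satisfies ⌊m/2⌋ ≤ t ≤ min{m−1, m̄}, where m̄ = ⌈(m−d)/(d+1)⌉; i.e., ⌊m/2⌋ ≤ M_*(Q_m,d) ≤ M^*(Q_m,d) ≤ min{m−1, m̄}. -/

import Mathlib

open Finset

/-- The coefficients of `P(x+d)` where `P(x) = ∑_{i=0}^m a i * x^i`:
`b j = ∑_{i=j}^m a i * d^(i-j) * C(i,j)`. -/
noncomputable def shiftCoeff (a : ℕ → ℝ) (m : ℕ) (d : ℝ) (j : ℕ) : ℝ :=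
  ∑ i ∈ Finset.Icc j m, a i * d ^ (i - j) * (i.choose j : ℝ)

/-- `t` is a mode of the finite sequence `b 0, b 1, …, b m`, i.e.
`b 0 ≤ ⋯ ≤ b t ≥ ⋯ ≥ b m`. -/
def IsMode (b : ℕ → ℝ) (m t : ℕ) : Prop :=
  t ≤ m ∧ (∀ i, i < t → b i ≤ b (i + 1)) ∧ (∀ i, t ≤ i → i < m → b (i + 1) ≤ b i)

/-- `m̄(d) = ⌈(m - d)/(d + 1)⌉` (a nonnegative integer since `(m-d)/(d+1) > -1`). -/
noncomputable def mbar (m : ℕ) (d : ℝ) : ℕ := (⌈((m : ℝ) - d) / (d + 1)⌉).toNat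

/-- The coefficients of `Q_m(x+d)` where `Q_m(x) = ∑_{i=0}^m x^i`:
`d_j = ∑_{i=j}^m d^(i-j) * C(i,j)`. -/
noncomputable def qCoeff (m : ℕ) (d : ℝ) (j : ℕ) : ℝ :=
  ∑ i ∈ Finset.Icc j m, d ^ (i - j) * (i.choose j : ℝ)

lemma qCoeff_self (m : ℕ) (d : ℝ) : qCoeff m d m = 1 := by
  simp [qCoeff]

lemma qCoeff_rec (m j : ℕ) (d : ℝ) (hj : j < m) :
    qCoeff m d j = (1 - d) * qCoeff m d (j+1) + (((m+1).choose (j+1) : ℕ) : ℝ) * d ^ (m - j) := by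
  induction m, hj using Nat.le_induction with
  | base =>
      have h1 : qCoeff (j+1) d j = 1 + d * (j+1) := by
        rw [qCoeff, Finset.sum_Icc_succ_top (by omega)]
        simp [Nat.choose_succ_self_right]
      have h2 : qCoeff (j+1) d (j+1) = 1 := qCoeff_self _ _
      rw [h1, h2]
      have : (j+1+1).choose (j+1) = j+2 := Nat.choose_succ_self_right _
      rw [this]
      have : (j+1) - j = 1 := by omega
      rw [this]
      push_cast
      ring
  | succ n hn ih =>
      have e1 : qCoeff (n+1) d j = qCoeff n d j + d ^ (n+1-j) * ((n+1).choose j : ℝ) := by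
        rw [qCoeff, qCoeff, Finset.sum_Icc_succ_top (by omega)]
      have e2 : qCoeff (n+1) d (j+1) = qCoeff n d (j+1) + d ^ (n-j) * ((n+1).choose (j+1) : ℝ) := by
        rw [qCoeff, qCoeff, Finset.sum_Icc_succ_top (by omega),
          show n+1-(j+1) = n-j from by omega]
      rw [e1, e2, ih]
      have hp : (n+1+1).choose (j+1) = (n+1).choose j + (n+1).choose (j+1) :=
        Nat.choose_succ_succ _ _
      rw [hp]
      have hpow : d ^ (n+1-j) = d * d ^ (n-j) := by
        rw [show n+1-j = (n-j)+1 by omega, pow_succ]; ring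
      rw [hpow]
      push_cast
      ring

lemma qCoeff_repr (m j : ℕ) (d : ℝ) (hj : j ≤ m) :
    qCoeff m d j
      = ∑ t ∈ Finset.range (m+1-j), (((m+1).choose (j+1+t) : ℕ) : ℝ) * d ^ (m-j-t) * (1-d) ^ t := by
  obtain ⟨a, ha⟩ : ∃ a, j + a = m := ⟨m - j, by omega⟩
  clear hj
  induction a generalizing j with
  | zero =>
      have hjm : j = m := by omega
      rw [hjm, qCoeff_self, show m+1-m = 1 from by omega]
      simp
  | succ a ih =>
      have hj : j < m := by omega
      rw [qCoeff_rec m j d hj, ih (j+1) (by omega)]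
      rw [show m+1-j = (m+1-(j+1))+1 from by omega, Finset.sum_range_succ']
      rw [Finset.mul_sum]
      have h0 : (((m+1).choose (j+1+0) : ℕ) : ℝ) * d ^ (m-j-0) * (1-d) ^ 0
          = ((m+1).choose (j+1) : ℝ) * d ^ (m-j) := by simp
      rw [h0]
      have hsum : ∀ t ∈ Finset.range (m+1-(j+1)),
          (1-d) * ((((m+1).choose (j+1+1+t) : ℕ) : ℝ) * d ^ (m-(j+1)-t) * (1-d) ^ t)
          = (((m+1).choose (j+1+(t+1)) : ℕ) : ℝ) * d ^ (m-j-(t+1)) * (1-d) ^ (t+1) := by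
        intro t ht
        rw [show j+1+1+t = j+1+(t+1) from by omega, show m-(j+1)-t = m-j-(t+1) from by omega,
          pow_succ]
        ring
      rw [Finset.sum_congr rfl hsum]

lemma qCoeff_delta (m j : ℕ) (d : ℝ) (hj : j < m) :
    qCoeff m d (j+1) - qCoeff m d j
      = d * qCoeff m d (j+1) - (((m+1).choose (j+1) : ℕ) : ℝ) * d ^ (m - j) := by
  rw [qCoeff_rec m j d hj]; ring

lemma choose_mid_le (m j : ℕ) (h : 2*(j+1) ≤ m) :
    (m+1).choose (j+1) ≤ (m+1).choose (j+2) := by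
  rcases Nat.lt_or_ge (j+1) ((m+1)/2) with h1 | h1
  · exact Nat.choose_le_succ_of_lt_half_left h1
  · have hm : m = 2*j+2 := by omega
    subst hm
    have : (2*j+2+1) - (j+2) = j+1 := by omega
    rw [← this, Nat.choose_symm (by omega)]

lemma qCoeff_inc (m j : ℕ) (d : ℝ) (hd0 : 0 < d) (hd1 : d < 1) (h : 2*(j+1) ≤ m) :
    qCoeff m d j < qCoeff m d (j+1) := by
  have hj : j < m := by omega
  have hrepr := qCoeff_repr m (j+1) d (by omega)
  set f : ℕ → ℝ := fun t => (((m+1).choose (j+1+1+t) : ℕ) : ℝ) * d ^ (m-(j+1)-t) * (1-d) ^ t with hf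
  have hsub : ({0, 1} : Finset ℕ) ⊆ Finset.range (m+1-(j+1)) := by
    intro x hx
    simp only [Finset.mem_insert, Finset.mem_singleton] at hx
    rcases hx with rfl | rfl <;> simp <;> omega
  have hlow : f 0 + f 1 ≤ qCoeff m d (j+1) := by
    rw [hrepr]
    have : ∑ t ∈ ({0, 1} : Finset ℕ), f t ≤ ∑ t ∈ Finset.range (m+1-(j+1)), f t := by
      apply Finset.sum_le_sum_of_subset_of_nonneg hsub
      intro t _ _
      have : (0:ℝ) ≤ 1 - d := by linarith
      positivity
    rw [Finset.sum_pair (by omega : (0:ℕ) ≠ 1)] at this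
    exact this
  have hf0 : f 0 = (((m+1).choose (j+2) : ℕ) : ℝ) * d ^ (m-j-1) := by
    simp only [hf]
    rw [show j+1+1+0 = j+2 from rfl, show m-(j+1)-0 = m-j-1 from by omega]
    simp
  have hf1 : f 1 = (((m+1).choose (j+3) : ℕ) : ℝ) * d ^ (m-j-2) * (1-d) := by
    simp only [hf]
    rw [show j+1+1+1 = j+3 from by omega, show m-(j+1)-1 = m-j-2 from by omega]
    simp
  have hc1 : (((m+1).choose (j+1) : ℕ) : ℝ) ≤ ((m+1).choose (j+2) : ℕ) := by
    exact_mod_cast choose_mid_le m j h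
  have hc3 : (0:ℝ) < ((m+1).choose (j+3) : ℕ) := by
    have : 0 < (m+1).choose (j+3) := Nat.choose_pos (by omega)
    exact_mod_cast this
  have hdm1 : (0:ℝ) < d ^ (m-j-1) := pow_pos hd0 _
  have hdm2 : (0:ℝ) < d ^ (m-j-2) := pow_pos hd0 _
  have hkey : (((m+1).choose (j+1) : ℕ) : ℝ) * d ^ (m-j-1) < qCoeff m d (j+1) := by
    have h1 : (((m+1).choose (j+1) : ℕ) : ℝ) * d ^ (m-j-1) ≤ f 0 := by
      rw [hf0]
      apply mul_le_mul_of_nonneg_right hc1 (le_of_lt hdm1)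
    have h2 : 0 < f 1 := by
      rw [hf1]
      have : (0:ℝ) < 1 - d := by linarith
      positivity
    linarith
  have hdelta := qCoeff_delta m j d hj
  have hpow : d ^ (m-j) = d * d ^ (m-j-1) := by
    obtain ⟨k, hk⟩ : ∃ k, m - j = k+1 := ⟨m-j-1, by omega⟩
    rw [hk, show k+1-1 = k from by omega, pow_succ]; ring
  nlinarith [mul_lt_mul_of_pos_left hkey hd0]

lemma choose_bound (a j : ℕ) (ha : 1 ≤ a) (haj : a ≤ j) :
    ∀ t, t < a →
      (a+j+1).choose (a-1-t) * (j+2)^(t+1) ≤ (a+j+1).choose a * a^(t+1) := by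
  intro t
  induction t with
  | zero =>
      intro _
      have hid := Nat.choose_succ_right_eq (a+j+1) (a-1)
      rw [show a-1+1 = a from by omega, show a+j+1-(a-1) = j+2 from by omega] at hid
      simp only [zero_add, pow_one, Nat.sub_zero]
      omega
  | succ t ih =>
      intro ht
      have ih' := ih (by omega)
      set u := a-2-t with hu
      have hu1 : a-1-(t+1) = u := by omega
      have hu2 : a-1-t = u+1 := by omega
      have hid := Nat.choose_succ_right_eq (a+j+1) u
      have hnu : a+j+1-u = j+3+(a-2-t-u)+t := by omega
      have hnu' : a+j+1-u ≥ j+3 := by omega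
      -- key : choose u * (j+2) ≤ choose (u+1) * a
      have hmul : (u+1)*(j+2) ≤ a*(a+j+1-u) := by
        have h1 : u+1 ≤ a-1 := by omega
        have h2 : (u+1)*(j+2) ≤ (a-1)*(j+2) := Nat.mul_le_mul_right _ h1
        have h3 : (a-1)*(j+2) ≤ a*(j+3) := by nlinarith [Nat.sub_le a 1]
        have h4 : a*(j+3) ≤ a*(a+j+1-u) := Nat.mul_le_mul_left _ hnu'
        omega
      have hkey : (a+j+1).choose u * (j+2) ≤ (a+j+1).choose (u+1) * a := by
        have hpos : 0 < a+j+1-u := by omega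
        apply Nat.le_of_mul_le_mul_right _ hpos
        calc (a+j+1).choose u * (j+2) * (a+j+1-u)
            = (a+j+1).choose u * (a+j+1-u) * (j+2) := by ring
          _ = (a+j+1).choose (u+1) * (u+1) * (j+2) := by rw [← hid]
          _ = (a+j+1).choose (u+1) * ((u+1) * (j+2)) := by ring
          _ ≤ (a+j+1).choose (u+1) * (a*(a+j+1-u)) := Nat.mul_le_mul_left _ hmul
          _ = (a+j+1).choose (u+1) * a * (a+j+1-u) := by ring
      rw [hu1]
      calc (a+j+1).choose u * (j+2)^(t+1+1)
          = (a+j+1).choose u * (j+2) * (j+2)^(t+1) := by rw [pow_succ]; ring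
        _ ≤ (a+j+1).choose (u+1) * a * (j+2)^(t+1) := Nat.mul_le_mul_right _ hkey
        _ = ((a+j+1).choose (u+1) * (j+2)^(t+1)) * a := by ring
        _ ≤ ((a+j+1).choose a * a^(t+1)) * a := by
              apply Nat.mul_le_mul_right
              rw [← hu2]; exact ih'
        _ = (a+j+1).choose a * a^(t+1+1) := by rw [pow_succ]; ring

set_option maxHeartbeats 1000000 in
lemma qCoeff_dec (m j : ℕ) (d : ℝ) (hd0 : 0 < d) (hd1 : d < 1) (hj : j < m)
    (hcond : (m:ℝ) - j ≤ d * ((j:ℝ)+1)) :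
    qCoeff m d (j+1) < qCoeff m d j := by
  obtain ⟨a, ha⟩ : ∃ a, j + a = m := ⟨m - j, by omega⟩
  have ha1 : 1 ≤ a := by omega
  have hAm : ((a:ℝ)) ≤ d * ((j:ℝ)+1) := by
    have hma : ((m:ℝ)) - j = (a:ℝ) := by rw [← ha]; push_cast; ring
    linarith
  have haj : a ≤ j := by
    have h1 : (a:ℝ) < (j:ℝ)+1 := by nlinarith
    have : a < j+1 := by exact_mod_cast h1
    omega
  have hApos : (0:ℝ) < (a:ℝ) := by exact_mod_cast ha1
  have hJ2pos : (0:ℝ) < (j:ℝ)+2 := by positivity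
  have hgpos : (0:ℝ) < (j:ℝ)+1-(a:ℝ) := by
    have : (a:ℝ) ≤ (j:ℝ) := by exact_mod_cast haj
    linarith
  have he0 : (0:ℝ) ≤ 1 - d := by linarith
  set γ : ℝ := ((j:ℝ)+1-(a:ℝ))/((j:ℝ)+2) with hγ
  have hγ0 : 0 < γ := by positivity
  have hγ1 : γ < 1 := by
    rw [hγ, div_lt_one hJ2pos]
    linarith
  set CA : ℝ := (((m+1).choose (j+1) : ℕ) : ℝ) with hCA
  have hCApos : (0:ℝ) < CA := by
    rw [hCA]
    exact_mod_cast Nat.choose_pos (by omega : j+1 ≤ m+1)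
  have hCAa : (((m+1).choose a : ℕ) : ℝ) = CA := by
    rw [hCA]
    congr 1
    rw [show a = m+1-(j+1) from by omega]
    exact Nat.choose_symm (by omega)
  set K : ℝ := CA * d ^ (a-1) * ((a:ℝ)/((j:ℝ)+2)) with hK
  have hdpow : (0:ℝ) < d ^ (a-1) := pow_pos hd0 _
  have hKpos : 0 < K := by
    rw [hK]; positivity
  -- termwise bound
  have hterm : ∀ t ∈ Finset.range a,
      (((m+1).choose (j+1+1+t) : ℕ) : ℝ) * d ^ (m-(j+1)-t) * (1-d) ^ t ≤ K * γ ^ t := by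
    intro t ht
    rw [Finset.mem_range] at ht
    have hidx1 : j+1+1+t = j+2+t := by omega
    have hidx2 : m-(j+1)-t = a-1-t := by omega
    rw [hidx1, hidx2]
    have hsymm : (m+1).choose (j+2+t) = (m+1).choose (a-1-t) := by
      rw [show a-1-t = m+1-(j+2+t) from by omega]
      exact (Nat.choose_symm (by omega)).symm
    rw [hsymm]
    set C' : ℝ := (((m+1).choose (a-1-t) : ℕ) : ℝ) with hC'
    have hC'0 : 0 ≤ C' := by rw [hC']; positivity
    -- bound on (1-d)^t
    have heb : (1-d) * (a:ℝ) ≤ d * ((j:ℝ)+1-(a:ℝ)) := by nlinarith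
    have he2 : 1-d ≤ d * ((j:ℝ)+1-(a:ℝ)) / (a:ℝ) := by
      rw [le_div_iff₀ hApos]
      linarith
    have hpe : (1-d) ^ t ≤ (d * (((j:ℝ)+1-(a:ℝ)) / (a:ℝ))) ^ t := by
      apply pow_le_pow_left₀ he0 _ t
      rw [mul_div_assoc] at he2
      exact he2
    -- bound on choose via choose_bound
    have hcb : C' * ((j:ℝ)+2) ^ (t+1) ≤ CA * (a:ℝ) ^ (t+1) := by
      have hnat := choose_bound a j ha1 haj t ht
      rw [show a+j+1 = m+1 from by omega] at hnat
      rw [hC', ← hCAa]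
      exact_mod_cast hnat
    have hcb' : C' ≤ CA * (a:ℝ) ^ (t+1) / ((j:ℝ)+2) ^ (t+1) := by
      rw [le_div_iff₀ (pow_pos hJ2pos _)]
      exact hcb
    calc C' * d ^ (a-1-t) * (1-d) ^ t
        ≤ C' * d ^ (a-1-t) * (d * (((j:ℝ)+1-(a:ℝ)) / (a:ℝ))) ^ t := by
          apply mul_le_mul_of_nonneg_left hpe
          positivity
      _ = C' * d ^ (a-1) * (((j:ℝ)+1-(a:ℝ)) / (a:ℝ)) ^ t := by
          obtain ⟨s, hs⟩ : ∃ s, s = a-1-t := ⟨_, rfl⟩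
          rw [← hs, show a-1 = s+t from by omega, pow_add, mul_pow]
          ring
      _ ≤ (CA * (a:ℝ) ^ (t+1) / ((j:ℝ)+2) ^ (t+1)) * d ^ (a-1)
            * (((j:ℝ)+1-(a:ℝ)) / (a:ℝ)) ^ t := by
          apply mul_le_mul_of_nonneg_right _ (by positivity)
          exact mul_le_mul_of_nonneg_right hcb' (le_of_lt hdpow)
      _ = K * γ ^ t := by
          rw [hK, hγ, div_pow, div_pow]
          rw [pow_succ ((j:ℝ)+2), pow_succ (a:ℝ)]
          have hane : (a:ℝ) ≠ 0 := ne_of_gt hApos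
          have hJne : ((j:ℝ)+2) ≠ 0 := ne_of_gt hJ2pos
          have hat : (a:ℝ)^t ≠ 0 := pow_ne_zero _ hane
          have hJt : ((j:ℝ)+2)^t ≠ 0 := pow_ne_zero _ hJne
          field_simp
  -- sum bound
  have hrepr := qCoeff_repr m (j+1) d (by omega)
  rw [show m+1-(j+1) = a from by omega] at hrepr
  have hsum1 : qCoeff m d (j+1) ≤ K * ∑ t ∈ Finset.range a, γ ^ t := by
    rw [hrepr, Finset.mul_sum]
    exact Finset.sum_le_sum hterm
  have hgeom : (∑ t ∈ Finset.range a, γ ^ t) * (1 - γ) = 1 - γ ^ a := by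
    have := geom_sum_mul γ a
    nlinarith [this]
  have h1γ : 0 < 1 - γ := by linarith
  have hγa : 0 < γ ^ a := pow_pos hγ0 _
  have hS : (∑ t ∈ Finset.range a, γ ^ t) < 1 / (1-γ) := by
    rw [lt_div_iff₀ h1γ]
    rw [hgeom]
    linarith
  have h1γeq : 1 / (1-γ) = ((j:ℝ)+2)/((a:ℝ)+1) := by
    have hstep : 1 - γ = ((a:ℝ)+1)/((j:ℝ)+2) := by
      rw [hγ]; field_simp; ring
    rw [hstep, one_div_div]
  have hmain : qCoeff m d (j+1) < CA * d ^ (a-1) := by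
    have hS2 : (∑ t ∈ Finset.range a, γ ^ t) < ((j:ℝ)+2)/((a:ℝ)+1) := by
      rw [← h1γeq]; exact hS
    have h2 : K * (∑ t ∈ Finset.range a, γ ^ t) < K * (((j:ℝ)+2)/((a:ℝ)+1)) :=
      mul_lt_mul_of_pos_left hS2 hKpos
    have h3 : K * (((j:ℝ)+2)/((a:ℝ)+1)) = CA * d ^ (a-1) * ((a:ℝ)/((a:ℝ)+1)) := by
      rw [hK]
      have hJne : ((j:ℝ)+2) ≠ 0 := ne_of_gt hJ2pos
      have hane : ((a:ℝ)+1) ≠ 0 := by positivity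
      field_simp
    have h4 : CA * d ^ (a-1) * ((a:ℝ)/((a:ℝ)+1)) < CA * d ^ (a-1) := by
      have hlt : (a:ℝ)/((a:ℝ)+1) < 1 := by
        rw [div_lt_one (by positivity)]
        linarith
      have h5 := mul_lt_mul_of_pos_left hlt (mul_pos hCApos hdpow)
      rw [mul_one] at h5
      exact h5
    calc qCoeff m d (j+1) ≤ K * ∑ t ∈ Finset.range a, γ ^ t := hsum1
      _ < K * (((j:ℝ)+2)/((a:ℝ)+1)) := h2
      _ = CA * d ^ (a-1) * ((a:ℝ)/((a:ℝ)+1)) := h3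
      _ < CA * d ^ (a-1) := h4
  -- conclude
  have hdelta := qCoeff_delta m j d hj
  rw [← hCA] at hdelta
  have hpow : d ^ (m-j) = d * d ^ (a-1) := by
    rw [show m-j = (a-1)+1 from by omega, pow_succ]; ring
  rw [hpow] at hdelta
  nlinarith [mul_lt_mul_of_pos_left hmain hd0]

lemma qCoeff_dec_last (m : ℕ) (d : ℝ) (hd0 : 0 < d) (hm : 0 < m) :
    qCoeff m d m < qCoeff m d (m-1) := by
  obtain ⟨k, hk⟩ : ∃ k, m = k+1 := ⟨m-1, by omega⟩
  subst hk
  have hdelta := qCoeff_delta (k+1) k d (by omega)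
  rw [show k+1-k = 1 from by omega, qCoeff_self, pow_one] at hdelta
  have hch : ((k+1+1).choose (k+1) : ℝ) = (k:ℝ)+2 := by
    rw [Nat.choose_succ_self_right]; push_cast; ring
  rw [hch] at hdelta
  rw [show k+1-1 = k from by omega, qCoeff_self]
  nlinarith [hdelta, mul_nonneg (show (0:ℝ) ≤ (k:ℝ) from by positivity) hd0.le]

lemma qCoeff_step_down (m j : ℕ) (d : ℝ) (hd0 : 0 < d) (hd1 : d < 1) (hj : j+1 < m)
    (h : qCoeff m d (j+1) ≤ qCoeff m d j) :
    qCoeff m d (j+2) < qCoeff m d (j+1) := by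
  by_cases hc : (m:ℝ) - (j+1) ≤ d * (((j:ℝ)+1)+1)
  · have := qCoeff_dec m (j+1) d hd0 hd1 hj (by push_cast; push_cast at hc; linarith)
    convert this using 2
  · push_neg at hc
    have hdelta1 := qCoeff_delta m j d (by omega)
    have hdelta2 := qCoeff_delta m (j+1) d hj
    set C1 : ℝ := (((m+1).choose (j+1) : ℕ) : ℝ) with hC1
    set C2 : ℝ := (((m+1).choose (j+1+1) : ℕ) : ℝ) with hC2
    have hC1pos : (0:ℝ) < C1 := by
      rw [hC1]; exact_mod_cast Nat.choose_pos (by omega : j+1 ≤ m+1)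
    have hC2pos : (0:ℝ) < C2 := by
      rw [hC2]; exact_mod_cast Nat.choose_pos (by omega : j+1+1 ≤ m+1)
    -- key : d * C1 < C2
    have hid : C2 * ((j:ℝ)+2) = C1 * ((m:ℝ)-(j:ℝ)) := by
      have := Nat.choose_succ_right_eq (m+1) (j+1)
      have hcast : (((m+1).choose (j+1+1) : ℕ) : ℝ) * ((j:ℝ)+1+1)
          = (((m+1).choose (j+1) : ℕ) : ℝ) * (((m+1-(j+1) : ℕ)) : ℝ) := by
        exact_mod_cast congrArg (Nat.cast : ℕ → ℝ) this
      rw [hC1, hC2]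
      rw [show (((m+1-(j+1) : ℕ)) : ℝ) = (m:ℝ)-(j:ℝ) from by
        rw [show m+1-(j+1) = m-j from by omega]
        push_cast [Nat.cast_sub (by omega : j ≤ m)]
        ring] at hcast
      calc (((m+1).choose (j+1+1) : ℕ) : ℝ) * ((j:ℝ)+2)
          = (((m+1).choose (j+1+1) : ℕ) : ℝ) * ((j:ℝ)+1+1) := by ring
        _ = (((m+1).choose (j+1) : ℕ) : ℝ) * ((m:ℝ)-(j:ℝ)) := hcast
    have hkey : d * C1 < C2 := by
      have h1 : d * (((j:ℝ))+2) < (m:ℝ) - (j:ℝ) - 1 := by push_cast at hc ⊢; linarith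
      have h2 : d * C1 * ((j:ℝ)+2) < C1 * ((m:ℝ)-(j:ℝ)) := by nlinarith
      rw [← hid] at h2
      have hj2 : (0:ℝ) < (j:ℝ)+2 := by positivity
      nlinarith
    -- from h : delta_j <= 0
    have hdm1 : (0:ℝ) < d ^ (m-j-1) := pow_pos hd0 _
    have hpowj : d ^ (m-j) = d * d ^ (m-j-1) := by
      obtain ⟨k, hk⟩ : ∃ k, m - j = k+1 := ⟨m-j-1, by omega⟩
      rw [hk, show k+1-1 = k from by omega, pow_succ]; ring
    rw [hpowj] at hdelta1
    have hexp : m - (j+1) = m - j - 1 := by omega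
    rw [hexp] at hdelta2
    have hrec := qCoeff_rec m (j+1) d hj
    rw [hexp] at hrec
    have hE : j+1+1 = j+2 := by omega
    rw [hE] at hrec hdelta2
    set p : ℝ := d ^ (m-j-1) with hp
    set x : ℝ := qCoeff m d (j+1) with hx
    set y : ℝ := qCoeff m d (j+2) with hy
    -- hdelta1 : x - q j = d * x - C1 * (d * p); h : x ≤ q j
    have hx1 : d * x ≤ d * (C1 * p) := by nlinarith [hdelta1, h]
    have hx2 : x ≤ C1 * p := (mul_le_mul_iff_right₀ hd0).mp hx1
    -- hrec : x = (1-d) * y + C2 * p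
    have hyineq : (1-d) * y ≤ (C1 - C2) * p := by nlinarith [hrec, hx2]
    have hd1' : (0:ℝ) < 1 - d := by linarith
    have t2' := mul_lt_mul_of_pos_right hkey hdm1
    have t1 : d * ((1-d)*y) ≤ d * ((C1-C2)*p) :=
      mul_le_mul_of_nonneg_left hyineq (le_of_lt hd0)
    have h6 : (1-d) * (d*y) < (1-d) * (C2*p) := by nlinarith [t1, t2']
    have hgoal2 : d * y < C2 * p := (mul_lt_mul_iff_right₀ hd1').mp h6
    -- hdelta2 : y - x = d * y - C2 * p
    linarith [hdelta2, hgoal2]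

/-- Proposition 3.6(i).  Let `0 < d < 1`.  Then `Q_m(x+d)` has a mode,
and every mode `t` of `Q_m(x+d)` satisfies `⌊m/2⌋ ≤ t ≤ min {m−1, m̄}`. -/
theorem stmt_14 (m : ℕ) (hm : 0 < m) (d : ℝ) (hd0 : 0 < d) (hd1 : d < 1) :
    (∃ t, IsMode (qCoeff m d) m t) ∧
      ∀ t, IsMode (qCoeff m d) m t → m / 2 ≤ t ∧ t ≤ min (m - 1) (mbar m d) := by
  classical
  constructor
  · -- existence
    have hex : ∃ j, m ≤ j ∨ qCoeff m d (j+1) ≤ qCoeff m d j := ⟨m, Or.inl le_rfl⟩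
    set t₀ := Nat.find hex with ht₀
    refine ⟨t₀, Nat.find_le (Or.inl le_rfl), ?_, ?_⟩
    · intro i hi
      have hni := Nat.find_min hex hi
      push_neg at hni
      exact le_of_lt hni.2
    · -- decreasing part by induction
      have hdec : ∀ i, t₀ ≤ i → i < m → qCoeff m d (i+1) ≤ qCoeff m d i := by
        intro i hi
        induction i, hi using Nat.le_induction with
        | base =>
            intro hlt
            have hspec := Nat.find_spec hex
            rcases hspec with h1 | h2
            · omega
            · exact h2
        | succ n hn ih =>
            intro hlt
            have hn' : n < m := by omega
            have h1 := ih hn'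
            have := qCoeff_step_down m n d hd0 hd1 (by omega) h1
            have hE : n+2 = n+1+1 := by omega
            rw [hE] at this
            exact le_of_lt this
      exact hdec
  · -- bounds
    intro t ht
    obtain ⟨htm, hinc, hdecr⟩ := ht
    constructor
    · -- lower bound
      by_contra hcon
      push_neg at hcon
      have h2t : 2*(t+1) ≤ m := by omega
      have hlt := qCoeff_inc m t d hd0 hd1 h2t
      have := hdecr t le_rfl (by omega)
      linarith
    · rw [le_min_iff]
      constructor
      · -- t ≤ m - 1
        by_contra hcon
        push_neg at hcon
        have htm' : t = m := by omega
        have h1 := hinc (m-1) (by omega)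
        rw [show m-1+1 = m from by omega] at h1
        have h2 := qCoeff_dec_last m d hd0 hm
        linarith
      · -- t ≤ mbar
        by_contra hcon
        push_neg at hcon
        have hmb := hcon
        -- mbar < t ≤ m
        have hmblt : mbar m d < m := by omega
        have hceil : ((m:ℝ) - d) / (d+1) ≤ (mbar m d : ℝ) := by
          have h1 : (0:ℝ) < ((m:ℝ) - d) / (d+1) := by
            apply div_pos
            · have : (1:ℝ) ≤ (m:ℝ) := by exact_mod_cast hm
              linarith
            · linarith
          have h2 : (1:ℤ) ≤ ⌈((m:ℝ) - d) / (d+1)⌉ := by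
            exact_mod_cast Int.le_ceil_iff.mpr (by norm_num; linarith [h1])
          have h3 : ((mbar m d : ℕ) : ℝ) = ((⌈((m:ℝ) - d) / (d+1)⌉ : ℤ) : ℝ) := by
            have h4 := Int.toNat_of_nonneg (show (0:ℤ) ≤ ⌈((m:ℝ) - d) / (d+1)⌉ from by omega)
            rw [mbar]
            exact_mod_cast congrArg (fun z : ℤ => (z : ℝ)) h4
          rw [h3]
          exact Int.le_ceil _
        have hcond : (m:ℝ) - (mbar m d : ℝ) ≤ d * ((mbar m d : ℝ)+1) := by
          have hd1' : (0:ℝ) < d + 1 := by linarith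
          rw [div_le_iff₀ hd1'] at hceil
          nlinarith
        have hdec := qCoeff_dec m (mbar m d) d hd0 hd1 hmblt hcond
        have hinc' := hinc (mbar m d) hmb
        linarith
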